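/- Suppose the pair (C,p) is welfare-optimal, i.e., W(M(C,p)) ≥ W(M(C',p')) for every integer C' ≥ 1 and every p' ≥ 0, and suppose C is even. Let q = Pr_{V∼F}[ d_V(p) ≥ C ]. Then the safe-price auction with cap C/2 satisfies W(M(C/2)) ≥ (q/2)·(1C). -/

import Mathlib

open MeasureTheory ProbabilityTheory

noncomputable section

/-- The marginal value of the `j`-th license under the curve `V`. -/
def marg (V : ℕ → ℝ) (j : ℕ) : ℝ := V j - V (j - 1)

/-- A valuation curve: `V 0 = 0`, nondecreasing, nonincreasing marginal values,
and only finitely many nonzero marginal values. -/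
def IsValuation (V : ℕ → ℝ) : Prop :=
  V 0 = 0 ∧ Monotone V ∧ (∀ j : ℕ, 1 ≤ j → marg V (j + 1) ≤ marg V j) ∧
    ∃ N : ℕ, ∀ j : ℕ, N ≤ j → marg V j = 0

/-- A social cost function: `Q 0 = 0`, nondecreasing, and (discretely) convex. -/
def IsCost (Q : ℕ → ℝ) : Prop :=
  Q 0 = 0 ∧ Monotone Q ∧ ∀ x : ℕ, 1 ≤ x → Q x - Q (x - 1) ≤ Q (x + 1) - Q x

/-- The demand of a valuation curve at price `p`:
`sup { j ≥ 1 : marg V j ≥ p } ∈ ℕ ∪ {∞}` (with `sup ∅ = 0`). -/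
def dem (V : ℕ → ℝ) (p : ℝ) : ℕ∞ :=
  sSup {j : ℕ∞ | ∃ k : ℕ, j = (k : ℕ∞) ∧ 1 ≤ k ∧ p ≤ marg V k}

/-- Number of licenses sold to curve `V` under cap `C` (possibly `∞`) and price floor `p`. -/
def sold (C : ℕ∞) (p : ℝ) (V : ℕ → ℝ) : ℕ := (min C (dem V p)).toNat

/-- The safe price for cap `C`: the average social cost `Q C / C` per license. -/
def safeP (Q : ℕ → ℝ) (C : ℕ) : ℝ := Q C / C

/-- Truth-telling expected welfare of the no-ceiling cap-and-price auction `M(C,p)`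
for a distribution `F` over (combined) valuation curves. -/
def Wfl (F : Measure (ℕ → ℝ)) (Q : ℕ → ℝ) (C : ℕ∞) (p : ℝ) : ℝ :=
  ∫ V, (V (sold C p V) - Q (sold C p V)) ∂F

/-- Number of licenses sold under cap `C`, price floor `p`, and price ceiling `pbar`. -/
def xceil (C : ℕ) (p pbar : ℝ) (V : ℕ → ℝ) : ℕ :=
  if (C : ℕ∞) ≤ dem V pbar then (dem V pbar).toNat else sold (C : ℕ∞) p V

/-- Truth-telling expected welfare of the cap-and-price auction `M(C,p,pbar)`. -/
def Wceil (F : Measure (ℕ → ℝ)) (Q : ℕ → ℝ) (C : ℕ) (p pbar : ℝ) : ℝ :=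
  ∫ V, (V (xceil C p pbar V) - Q (xceil C p pbar V)) ∂F

/-- The combined valuation curve of a profile of valuation curves. -/
def comb {n : ℕ} (Vp : Fin n → ℕ → ℝ) (x : ℕ) : ℝ :=
  sSup {s : ℝ | ∃ y : Fin n → ℕ, (∑ i, y i) = x ∧ s = ∑ i, Vp i (y i)}

open Classical in
/-- Product of a family of probability measures (0 if the family fails to consist
of probability measures). -/
def piProb {ι : Type*} [Fintype ι] {α : ι → Type*} [∀ i, MeasurableSpace (α i)]
    (μ : ∀ i, Measure (α i)) : Measure (∀ i, α i) :=
  if h : ∀ i, IsProbabilityMeasure (μ i) then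
    haveI := h
    Measure.pi μ
  else 0

/-- Truth-telling expected welfare of `M(C,p)` for independent firms with
valuation distributions `F i`, computed via the combined valuation curve. -/
def Wcomb {n : ℕ} (F : Fin n → Measure (ℕ → ℝ)) (Q : ℕ → ℝ) (C : ℕ∞) (p : ℝ) : ℝ :=
  ∫ Vp, (comb Vp (sold C p (comb Vp)) - Q (sold C p (comb Vp))) ∂(piProb F)

/-- Truth-telling expected welfare of `M(C,p,pbar)` for independent firms. -/
def WceilComb {n : ℕ} (F : Fin n → Measure (ℕ → ℝ)) (Q : ℕ → ℝ) (C : ℕ) (p pbar : ℝ) : ℝ :=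
  ∫ Vp, (comb Vp (xceil C p pbar (comb Vp)) - Q (xceil C p pbar (comb Vp))) ∂(piProb F)

/-- `W^{(1)}`: the expected optimal welfare from allocating licenses to a single firm. -/
def W1 {n : ℕ} (F : Fin n → Measure (ℕ → ℝ)) (Q : ℕ → ℝ) : ℝ :=
  ∫ Vp, sSup {w : ℝ | ∃ (i : Fin n) (x : ℕ), w = Vp i x - Q x} ∂(piProb F)

/-- The per-license price in the uniform-price auction with cap `C` and floor `pf`,
given a bid profile `b`. -/
def priceOf {n : ℕ} (C : ℕ) (pf : ℝ) (b : Fin n → ℕ → ℝ) : ℝ :=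
  if (∑ i, dem (b i) pf) < (C : ℕ∞) then pf else comb b C - comb b (C - 1)

/-- A (measurable) tie-breaking allocation rule for the uniform-price auction with
cap `C` and price floor `pf`. -/
def IsAllocRule {n : ℕ} (C : ℕ) (pf : ℝ) (alloc : (Fin n → ℕ → ℝ) → Fin n → ℕ) : Prop :=
  Measurable alloc ∧
    ∀ b : Fin n → ℕ → ℝ, (∀ i, IsValuation (b i)) →
      (((∑ i, dem (b i) pf) < (C : ℕ∞)) → ∀ i, alloc b i = (dem (b i) pf).toNat) ∧
      (((C : ℕ∞) ≤ ∑ i, dem (b i) pf) →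
        (∑ i, alloc b i) = C ∧
          ∀ y : Fin n → ℕ, (∑ i, y i) = C → (∑ i, b i (y i)) ≤ ∑ i, b i (alloc b i))

/-- The strategy `σi` never overbids: with probability one the bid is a valuation
curve pointwise below the true valuation. -/
def NoOverbid (σi : Kernel (ℕ → ℝ) (ℕ → ℝ)) : Prop :=
  ∀ V : ℕ → ℝ, IsValuation V → σi V {B | IsValuation B ∧ ∀ x, B x ≤ V x} = 1

/-- Expected welfare when the firms play the (randomized) strategy profile `σ`. -/
def EqWelfare {n : ℕ} (F : Fin n → Measure (ℕ → ℝ)) (σ : Fin n → Kernel (ℕ → ℝ) (ℕ → ℝ))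
    (alloc : (Fin n → ℕ → ℝ) → Fin n → ℕ) (Q : ℕ → ℝ) : ℝ :=
  ∫ Vp, (∫ b, ((∑ i, Vp i (alloc b i)) - Q (∑ i, alloc b i))
      ∂(piProb fun j => σ j (Vp j))) ∂(piProb F)

/-- Expected utility of firm `i` with valuation `Vi` when every firm plays `σ`. -/
def EUeq {n : ℕ} (F : Fin n → Measure (ℕ → ℝ)) (σ : Fin n → Kernel (ℕ → ℝ) (ℕ → ℝ))
    (alloc : (Fin n → ℕ → ℝ) → Fin n → ℕ) (C : ℕ) (pf : ℝ) (i : Fin n) (Vi : ℕ → ℝ) : ℝ :=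
  ∫ Vp, (∫ b, (Vi (alloc b i) - priceOf C pf b * (alloc b i : ℝ))
      ∂(piProb fun j => σ j (Function.update Vp i Vi j))) ∂(piProb F)

/-- Expected utility of firm `i` with valuation `Vi` deviating to the fixed bid `Bt`
while the others play `σ`. -/
def EUdev {n : ℕ} (F : Fin n → Measure (ℕ → ℝ)) (σ : Fin n → Kernel (ℕ → ℝ) (ℕ → ℝ))
    (alloc : (Fin n → ℕ → ℝ) → Fin n → ℕ) (C : ℕ) (pf : ℝ) (i : Fin n) (Vi Bt : ℕ → ℝ) : ℝ :=
  ∫ Vp, (∫ b, (Vi (alloc b i) - priceOf C pf b * (alloc b i : ℝ))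
      ∂(piProb fun j => if j = i then Measure.dirac Bt else σ j (Vp j))) ∂(piProb F)

/-- Bayes–Nash equilibrium of the uniform-price auction with cap `C` and floor `pf`. -/
def IsBNE {n : ℕ} (F : Fin n → Measure (ℕ → ℝ)) (σ : Fin n → Kernel (ℕ → ℝ) (ℕ → ℝ))
    (alloc : (Fin n → ℕ → ℝ) → Fin n → ℕ) (C : ℕ) (pf : ℝ) : Prop :=
  ∀ (i : Fin n) (Vi : ℕ → ℝ), IsValuation Vi → ∀ Bt : ℕ → ℝ, IsValuation Bt →
    EUdev F σ alloc C pf i Vi Bt ≤ EUeq F σ alloc C pf i Vi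

/-- `θ_V = min( d_V(p), d_V(P(C)) )`, as a natural number. -/
def thetaN (Q : ℕ → ℝ) (C : ℕ) (p : ℝ) (V : ℕ → ℝ) : ℕ :=
  (min (dem V p) (dem V (safeP Q C))).toNat
section Lemmas

variable {V : ℕ → ℝ} {p : ℝ} {Q : ℕ → ℝ}

lemma le_dem {k : ℕ} (hk : 1 ≤ k) (h : p ≤ marg V k) : (k : ℕ∞) ≤ dem V p :=
  le_sSup ⟨k, rfl, hk, h⟩

lemma marg_lt_of_dem_lt {k : ℕ} (hk : 1 ≤ k) (h : ¬ ((k : ℕ∞) ≤ dem V p)) :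
    marg V k < p := by
  by_contra hc
  exact h (le_dem hk (le_of_not_gt hc))

lemma dem_ge_iff {k : ℕ} (hk : 1 ≤ k) :
    (k : ℕ∞) ≤ dem V p ↔ ∃ j : ℕ, k ≤ j ∧ p ≤ marg V j := by
  constructor
  · intro h
    by_contra hc
    push_neg at hc
    have hub : dem V p ≤ ((k - 1 : ℕ) : ℕ∞) := by
      apply sSup_le
      rintro x ⟨j, rfl, hj1, hjp⟩
      have : ¬ k ≤ j := fun hkj => (hc j hkj).not_ge hjp
      exact_mod_cast Nat.le_sub_one_of_lt (Nat.lt_of_not_le this)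
    have := h.trans hub
    rw [Nat.cast_le] at this
    omega
  · rintro ⟨j, hkj, hpj⟩
    exact le_trans (by exact_mod_cast hkj) (le_dem (hk.trans hkj) hpj)

lemma marg_anti (hV : IsValuation V) : ∀ i j : ℕ, 1 ≤ i → i ≤ j → marg V j ≤ marg V i := by
  intro i j hi hij
  induction j with
  | zero => omega
  | succ n ih =>
    rcases Nat.lt_or_ge i (n + 1) with h | h
    · have hn : 1 ≤ n := by omega
      exact le_trans (hV.2.2.1 n hn) (ih (by omega))
    · have : i = n + 1 := by omega
      subst this; rfl

lemma marg_nonneg (hV : IsValuation V) (k : ℕ) : 0 ≤ marg V k := by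
  have := hV.2.1 (Nat.sub_le k 1)
  simpa [marg] using this

lemma dem_ge_iff' (hV : IsValuation V) {k : ℕ} (hk : 1 ≤ k) :
    (k : ℕ∞) ≤ dem V p ↔ p ≤ marg V k := by
  rw [dem_ge_iff hk]
  constructor
  · rintro ⟨j, hkj, hpj⟩
    exact hpj.trans (marg_anti hV k j hk hkj)
  · intro h; exact ⟨k, le_rfl, h⟩

lemma tel_sum (f : ℕ → ℝ) {a b : ℕ} (h : a ≤ b) :
    f b - f a = ∑ i ∈ Finset.Ico a b, (f (i + 1) - f i) := by
  induction b with
  | zero => have : a = 0 := by omega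
            subst this; simp
  | succ n ih =>
    rcases Nat.lt_or_ge a (n + 1) with h' | h'
    · have ha : a ≤ n := by omega
      rw [Finset.sum_Ico_succ_top ha, ← ih ha]; ring
    · have : a = n + 1 := by omega
      subst this; simp

lemma marg_succ (j : ℕ) : marg V (j + 1) = V (j + 1) - V j := by
  simp [marg]

lemma dq_mono (hQ : IsCost Q) : ∀ i j : ℕ, 1 ≤ i → i ≤ j →
    Q i - Q (i - 1) ≤ Q j - Q (j - 1) := by
  intro i j hi hij
  induction j with
  | zero => omega
  | succ n ih =>
    rcases Nat.lt_or_ge i (n + 1) with h | h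
    · have hn : 1 ≤ n := by omega
      refine le_trans (ih (by omega)) ?_
      have := hQ.2.2 n hn
      simpa using this
    · have : i = n + 1 := by omega
      subst this; rfl

lemma dq_mono' (hQ : IsCost Q) {i j : ℕ} (hij : i ≤ j) :
    Q (i + 1) - Q i ≤ Q (j + 1) - Q j := by
  have := dq_mono hQ (i + 1) (j + 1) (by omega) (by omega)
  simpa using this

/-- average cost monotone: `Q m / m ≤ Q n / n` in cleared form. -/
lemma Q_avg (hQ : IsCost Q) {m n : ℕ} (h : m ≤ n) :
    Q m * (n : ℝ) ≤ Q n * (m : ℝ) := by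
  set c : ℝ := Q (m + 1) - Q m with hc
  have h1 : Q m ≤ (m : ℝ) * c := by
    have := tel_sum Q (Nat.zero_le m)
    rw [hQ.1] at this
    have hb : ∑ i ∈ Finset.Ico 0 m, (Q (i + 1) - Q i) ≤ ∑ _i ∈ Finset.Ico 0 m, c := by
      apply Finset.sum_le_sum
      intro i hi
      simp only [Finset.mem_Ico] at hi
      exact dq_mono' hQ (by omega)
    rw [← this] at hb
    simpa using hb
  have h2 : ((n - m : ℕ) : ℝ) * c ≤ Q n - Q m := by
    have := tel_sum Q h
    have hb : ∑ _i ∈ Finset.Ico m n, c ≤ ∑ i ∈ Finset.Ico m n, (Q (i + 1) - Q i) := by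
      apply Finset.sum_le_sum
      intro i hi
      simp only [Finset.mem_Ico] at hi
      exact dq_mono' hQ (by omega)
    rw [← this] at hb
    simpa using hb
  have hmn : (m : ℝ) ≤ (n : ℝ) := by exact_mod_cast h
  have hm0 : (0 : ℝ) ≤ (m : ℝ) := by positivity
  have hcast : ((n - m : ℕ) : ℝ) = (n : ℝ) - (m : ℝ) := by
    exact Nat.cast_sub h
  rw [hcast] at h2
  nlinarith [mul_le_mul_of_nonneg_right h2 hm0]

/-- midpoint: `2 Q K ≤ Q a + Q b` when `a + b = 2K`. -/
lemma Q_mid_core (hQ : IsCost Q) {a K : ℕ} (ha : a ≤ K) :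
    Q K + Q K ≤ Q a + Q (2 * K - a) := by
  have hb : K ≤ 2 * K - a := by omega
  have h1 : Q K - Q a = ∑ t ∈ Finset.range (K - a), (Q (a + t + 1) - Q (a + t)) := by
    rw [tel_sum Q ha, Finset.sum_Ico_eq_sum_range]
  have h2 : Q (2 * K - a) - Q K = ∑ t ∈ Finset.range (2 * K - a - K), (Q (K + t + 1) - Q (K + t)) := by
    rw [tel_sum Q hb, Finset.sum_Ico_eq_sum_range]
  have hcard : 2 * K - a - K = K - a := by omega
  rw [hcard] at h2
  have h3 : ∑ t ∈ Finset.range (K - a), (Q (a + t + 1) - Q (a + t)) ≤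
      ∑ t ∈ Finset.range (K - a), (Q (K + t + 1) - Q (K + t)) := by
    apply Finset.sum_le_sum
    intro i _
    exact dq_mono' hQ (by omega)
  linarith [h1, h2, h3]

lemma Q_mid (hQ : IsCost Q) {a b K : ℕ} (hab : a + b = 2 * K) :
    Q K + Q K ≤ Q a + Q b := by
  rcases le_total a K with h | h
  · have : b = 2 * K - a := by omega
    subst this; exact Q_mid_core hQ h
  · have hbK : b ≤ K := by omega
    have : a = 2 * K - b := by omega
    subst this
    linarith [Q_mid_core hQ hbK]

end Lemmas
section Lemmas2

variable {V : ℕ → ℝ} {p : ℝ} {Q : ℕ → ℝ}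

lemma min_ne_top {N : ℕ} (x : ℕ∞) : min (N : ℕ∞) x ≠ ⊤ :=
  ne_top_of_le_ne_top (WithTop.coe_ne_top) (min_le_left _ _)

lemma sold_cast {N : ℕ} (pr : ℝ) : ((sold (N : ℕ∞) pr V : ℕ) : ℕ∞) = min (N : ℕ∞) (dem V pr) :=
  ENat.coe_toNat (min_ne_top _)

lemma sold_le {N : ℕ} (pr : ℝ) : sold (N : ℕ∞) pr V ≤ N := by
  have h := ENat.toNat_le_toNat (min_le_left (N : ℕ∞) (dem V pr)) WithTop.coe_ne_top
  simpa [sold] using h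

lemma sold_eq_of_ge {N : ℕ} {pr : ℝ} (h : (N : ℕ∞) ≤ dem V pr) : sold (N : ℕ∞) pr V = N := by
  simp [sold, min_eq_left h]

lemma sold_eq_of_lt {N : ℕ} {pr : ℝ} (h : dem V pr < (N : ℕ∞)) :
    sold (N : ℕ∞) pr V = (dem V pr).toNat := by
  simp [sold, min_eq_right h.le]

lemma marg_ge_of_le_sold (hV : IsValuation V) {N k : ℕ} {pr : ℝ} (hk : 1 ≤ k)
    (h : k ≤ sold (N : ℕ∞) pr V) : pr ≤ marg V k := by
  have h1 : (k : ℕ∞) ≤ min (N : ℕ∞) (dem V pr) := by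
    rw [← sold_cast pr]; exact_mod_cast h
  exact (dem_ge_iff' hV hk).mp (h1.trans (min_le_right _ _))

lemma marg_lt_of_sold_lt {N k : ℕ} {pr : ℝ} (hk : 1 ≤ k) (hkN : k ≤ N)
    (h : sold (N : ℕ∞) pr V < k) : marg V k < pr := by
  apply marg_lt_of_dem_lt hk
  intro hc
  have h1 : (k : ℕ∞) ≤ min (N : ℕ∞) (dem V pr) := le_min (by exact_mod_cast hkN) hc
  rw [← sold_cast pr, Nat.cast_le] at h1
  omega

lemma V_sub_le (hV : IsValuation V) {a b : ℕ} (hab : a ≤ b) {c : ℝ}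
    (h : ∀ k, a < k → k ≤ b → marg V k ≤ c) :
    V b - V a ≤ ((b - a : ℕ) : ℝ) * c := by
  rw [tel_sum V hab]
  have hb : ∑ i ∈ Finset.Ico a b, (V (i + 1) - V i) ≤ ∑ _i ∈ Finset.Ico a b, c := by
    apply Finset.sum_le_sum
    intro i hi
    simp only [Finset.mem_Ico] at hi
    rw [← marg_succ]
    exact h (i + 1) (by omega) (by omega)
  simpa [Nat.card_Ico] using hb

lemma V_sub_ge (hV : IsValuation V) {a b : ℕ} (hab : a ≤ b) {c : ℝ}
    (h : ∀ k, a < k → k ≤ b → c ≤ marg V k) :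
    ((b - a : ℕ) : ℝ) * c ≤ V b - V a := by
  rw [tel_sum V hab]
  have hb : ∑ _i ∈ Finset.Ico a b, c ≤ ∑ i ∈ Finset.Ico a b, (V (i + 1) - V i) := by
    apply Finset.sum_le_sum
    intro i hi
    simp only [Finset.mem_Ico] at hi
    rw [← marg_succ]
    exact h (i + 1) (by omega) (by omega)
  simpa [Nat.card_Ico] using hb

lemma V_shift (hV : IsValuation V) (K e : ℕ) : V (K + e) - V K ≤ V e := by
  have h1 : V (K + e) - V K = ∑ t ∈ Finset.range e, (V (K + t + 1) - V (K + t)) := by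
    rw [tel_sum V (Nat.le_add_right K e), Finset.sum_Ico_eq_sum_range]
    simp [Nat.add_sub_cancel_left]
  have h2 : V e - V 0 = ∑ t ∈ Finset.range e, (V (t + 1) - V t) := by
    rw [tel_sum V (Nat.zero_le e), Finset.sum_Ico_eq_sum_range]
    simp
  have h3 : ∑ t ∈ Finset.range e, (V (K + t + 1) - V (K + t)) ≤
      ∑ t ∈ Finset.range e, (V (t + 1) - V t) := by
    apply Finset.sum_le_sum
    intro i _
    have := marg_anti hV (i + 1) (K + i + 1) (by omega) (by omega)
    simpa [marg_succ] using this
  rw [hV.1] at h2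
  linarith

lemma Q_shift (hQ : IsCost Q) {K e : ℕ} (he : e ≤ K) :
    Q K - Q (K - e) ≤ Q (K + e) - Q K := by
  have h1 : Q K - Q (K - e) = ∑ t ∈ Finset.range e, (Q (K - e + t + 1) - Q (K - e + t)) := by
    rw [tel_sum Q (Nat.sub_le K e), Finset.sum_Ico_eq_sum_range,
      show K - (K - e) = e from by omega]
  have h2 : Q (K + e) - Q K = ∑ t ∈ Finset.range e, (Q (K + t + 1) - Q (K + t)) := by
    rw [tel_sum Q (Nat.le_add_right K e), Finset.sum_Ico_eq_sum_range]
    simp [Nat.add_sub_cancel_left]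
  rw [h1, h2]
  apply Finset.sum_le_sum
  intro i _
  exact dq_mono' hQ (by omega)

lemma lemW (hQ : IsCost Q) (hV : IsValuation V) {K j : ℕ} (hK : 1 ≤ K) (hj : j ≤ K) :
    V j - (j : ℝ) * safeP Q K ≤
      V (sold (K : ℕ∞) (safeP Q K) V) - Q (sold (K : ℕ∞) (safeP Q K) V) := by
  set s₂ := safeP Q K with hs₂
  set σ := sold (K : ℕ∞) s₂ V with hσ
  have hσK : σ ≤ K := sold_le _
  have hK0 : (0 : ℝ) < (K : ℝ) := by exact_mod_cast hK
  have hQσ : Q σ ≤ (σ : ℝ) * s₂ := by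
    have h := Q_avg hQ hσK
    rw [hs₂, safeP, ← mul_div_assoc, le_div_iff₀ hK0]
    linarith
  rcases le_total j σ with hc | hc
  · have hsum : ((σ - j : ℕ) : ℝ) * s₂ ≤ V σ - V j := by
      apply V_sub_ge hV hc
      intro k hk1 hk2
      exact marg_ge_of_le_sold hV (by omega) hk2
    have hcast : ((σ - j : ℕ) : ℝ) = (σ : ℝ) - (j : ℝ) := Nat.cast_sub hc
    rw [hcast] at hsum
    linarith
  · have hsum : V j - V σ ≤ ((j - σ : ℕ) : ℝ) * s₂ := by
      apply V_sub_le hV hc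
      intro k hk1 hk2
      exact (marg_lt_of_sold_lt (by omega) (by omega) hk1).le
    have hcast : ((j - σ : ℕ) : ℝ) = (j : ℝ) - (σ : ℝ) := Nat.cast_sub hc
    rw [hcast] at hsum
    linarith

lemma QC_ge (hQ : IsCost Q) {K C : ℕ} (hK : 1 ≤ K) (hCK : C = 2 * K) :
    2 * Q K ≤ Q C := by
  have h := Q_avg hQ (show K ≤ C by omega)
  have hK0 : (0 : ℝ) < (K : ℝ) := by exact_mod_cast hK
  have hCe : (C : ℝ) = 2 * (K : ℝ) := by rw [hCK]; push_cast; ring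
  rw [hCe] at h
  have h2 : (2 * Q K) * (K : ℝ) ≤ Q C * (K : ℝ) := by linarith
  exact le_of_mul_le_mul_right h2 hK0

lemma P1 (hQ : IsCost Q) (hV : IsValuation V) {K C : ℕ} (hK : 1 ≤ K) (hCK : C = 2 * K)
    (p : ℝ) :
    (if dem V p < (C : ℕ∞) then
        V ((dem V p).toNat) - V (thetaN Q C p V) - Q ((dem V p).toNat - thetaN Q C p V)
      else 0) ≤ Q C - 2 * Q K := by
  have hG : 2 * Q K ≤ Q C := QC_ge hQ hK hCK
  split_ifs with h
  · set s := safeP Q C with hs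
    have hdne : dem V p ≠ ⊤ := ne_top_of_lt h
    set d := (dem V p).toNat with hd
    have hdcast : (d : ℕ∞) = dem V p := ENat.coe_toNat hdne
    have hdC : d < C := by
      rw [← hdcast, Nat.cast_lt] at h
      exact h
    set θ := thetaN Q C p V with hθ
    have hmne : min (dem V p) (dem V s) ≠ ⊤ :=
      ne_top_of_le_ne_top hdne (min_le_left _ _)
    have hθcast : (θ : ℕ∞) = min (dem V p) (dem V s) := ENat.coe_toNat hmne
    have hθd : θ ≤ d := by
      rw [hθ, thetaN, hd]
      exact ENat.toNat_le_toNat (min_le_left _ _) hdne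
    have hmarg : ∀ k, θ < k → k ≤ d → marg V k ≤ s := by
      intro k hk1 hk2
      have hns : ¬ ((k : ℕ∞) ≤ dem V s) := by
        intro hc
        have h1 : (k : ℕ∞) ≤ min (dem V p) (dem V s) := by
          apply le_min _ hc
          rw [← hdcast, Nat.cast_le]
          exact hk2
        rw [← hθcast, Nat.cast_le] at h1
        omega
      exact (marg_lt_of_dem_lt (by omega) hns).le
    have hVd : V d - V θ ≤ ((d - θ : ℕ) : ℝ) * s := V_sub_le hV hθd hmarg
    set n := d - θ with hn
    have hnC : n ≤ C := by omega
    have hmid : Q K + Q K ≤ Q n + Q (C - n) := Q_mid hQ (by omega)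
    have havg := Q_avg hQ (show C - n ≤ C by omega)
    have hC0 : (0 : ℝ) < (C : ℝ) := by
      have : 0 < C := by omega
      exact_mod_cast this
    have hcast1 : ((C - n : ℕ) : ℝ) = (C : ℝ) - (n : ℝ) := Nat.cast_sub hnC
    have hsC : s * (C : ℝ) = Q C := by
      rw [hs, safeP, div_mul_cancel₀ _ (ne_of_gt hC0)]
    have hQCn : Q (C - n) ≤ s * ((C : ℝ) - (n : ℝ)) := by
      apply le_of_mul_le_mul_right _ hC0
      rw [hcast1] at havg
      nlinarith [havg]
    linarith
  · linarith

lemma P2 (hQ : IsCost Q) (hV : IsValuation V) {K C : ℕ} (hK : 1 ≤ K) (hCK : C = 2 * K)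
    (p : ℝ) :
    (V (sold (C : ℕ∞) p V) - Q (sold (C : ℕ∞) p V))
      - (V (sold (K : ℕ∞) p V) - Q (sold (K : ℕ∞) p V))
      + (if (C : ℕ∞) ≤ dem V p then Q C - 2 * Q K else 0)
      ≤ V (sold (K : ℕ∞) (safeP Q K) V) - Q (sold (K : ℕ∞) (safeP Q K) V) := by
  set s₂ := safeP Q K with hs₂
  set w := V (sold (K : ℕ∞) s₂ V) - Q (sold (K : ℕ∞) s₂ V) with hw
  have hK0 : (0 : ℝ) < (K : ℝ) := by exact_mod_cast hK
  have hw0 : 0 ≤ w := by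
    have h0 := lemW hQ hV hK (Nat.zero_le K)
    rw [hV.1, ← hs₂, ← hw] at h0
    simpa using h0
  have hKs : (K : ℝ) * s₂ = Q K := by
    rw [hs₂, safeP, mul_div_cancel₀ _ (ne_of_gt hK0)]
  rcases le_or_gt (dem V p) (K : ℕ∞) with h1 | hKd
  · have hCk : sold (C : ℕ∞) p V = sold (K : ℕ∞) p V := by
      unfold sold
      rw [min_eq_right (h1.trans (by exact_mod_cast (show K ≤ C by omega))),
        min_eq_right h1]
    have hif : ¬ ((C : ℕ∞) ≤ dem V p) := by
      intro hc
      have := hc.trans h1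
      rw [Nat.cast_le] at this
      omega
    rw [hCk, if_neg hif]
    simpa using hw0
  · rcases le_or_gt (C : ℕ∞) (dem V p) with h2 | hdC
    · rw [sold_eq_of_ge h2, sold_eq_of_ge (le_of_lt hKd), if_pos h2]
      have hshift : V C - V K ≤ V K := by
        have := V_shift hV K K
        rw [show K + K = C by omega] at this
        exact this
      have hWK : V K - (K : ℝ) * s₂ ≤ w := lemW hQ hV hK le_rfl
      linarith
    · set d := (dem V p).toNat with hd
      have hdne : dem V p ≠ ⊤ := ne_top_of_lt hdC
      have hdcast : (d : ℕ∞) = dem V p := ENat.coe_toNat hdne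
      have hdCn : d < C := by rw [← hdcast, Nat.cast_lt] at hdC; exact hdC
      have hKdn : K < d := by rw [← hdcast, Nat.cast_lt] at hKd; exact hKd
      rw [sold_eq_of_lt hdC, sold_eq_of_ge (le_of_lt hKd), ← hd,
        if_neg (not_le.mpr hdC)]
      set e := d - K with he
      have heK : e ≤ K := by omega
      have hshift : V d - V K ≤ V e := by
        have := V_shift hV K e
        rw [show K + e = d by omega] at this
        exact this
      have hQshift : Q K - Q (K - e) ≤ Q d - Q K := by
        have := Q_shift hQ heK
        rw [show K + e = d by omega] at this
        exact this
      have havg := Q_avg hQ (Nat.sub_le K e)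
      have hcast : ((K - e : ℕ) : ℝ) = (K : ℝ) - (e : ℝ) := Nat.cast_sub heK
      have hQKe : Q (K - e) ≤ Q K - (e : ℝ) * s₂ := by
        apply le_of_mul_le_mul_right _ hK0
        rw [hcast] at havg
        nlinarith [havg]
      have hWe : V e - (e : ℝ) * s₂ ≤ w := lemW hQ hV hK heK
      linarith

end Lemmas2
section Meas

lemma enat_eq_of {x : ℕ∞} {n : ℕ} (h1 : (n : ℕ∞) ≤ x) (h2 : x < ((n + 1 : ℕ) : ℕ∞)) :
    x = (n : ℕ∞) := by
  lift x to ℕ using ne_top_of_lt h2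
  rw [Nat.cast_le] at h1
  rw [Nat.cast_lt] at h2
  exact_mod_cast (by omega : x = n)

lemma enat_top_iff (x : ℕ∞) : x = ⊤ ↔ ∀ j : ℕ, (j : ℕ∞) ≤ x := by
  constructor
  · intro h j; rw [h]; exact le_top
  · intro h
    by_contra hne
    lift x to ℕ using hne
    have := h (x + 1)
    rw [Nat.cast_le] at this
    omega

lemma meas_marg (j : ℕ) : Measurable fun V : ℕ → ℝ => marg V j :=
  (measurable_pi_apply j).sub (measurable_pi_apply (j - 1))

lemma meas_dem_ge (k : ℕ) (pr : ℝ) : MeasurableSet {V : ℕ → ℝ | (k : ℕ∞) ≤ dem V pr} := by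
  rcases Nat.eq_zero_or_pos k with hk | hk
  · subst hk
    have he : {V : ℕ → ℝ | ((0 : ℕ) : ℕ∞) ≤ dem V pr} = Set.univ := by
      ext V; simp
    rw [he]; exact MeasurableSet.univ
  · have he : {V : ℕ → ℝ | (k : ℕ∞) ≤ dem V pr}
        = ⋃ j : ℕ, {V : ℕ → ℝ | k ≤ j ∧ pr ≤ marg V j} := by
      ext V
      simp only [Set.mem_setOf_eq, Set.mem_iUnion, dem_ge_iff hk]
    rw [he]
    apply MeasurableSet.iUnion
    intro j
    by_cases hkj : k ≤ j
    · have he2 : {V : ℕ → ℝ | k ≤ j ∧ pr ≤ marg V j} = {V : ℕ → ℝ | pr ≤ marg V j} := by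
        ext V; simp [hkj]
      rw [he2]
      exact measurableSet_le measurable_const (meas_marg j)
    · have he2 : {V : ℕ → ℝ | k ≤ j ∧ pr ≤ marg V j} = ∅ := by ext V; simp [hkj]
      rw [he2]; exact MeasurableSet.empty

lemma meas_sold (N : ℕ) (pr : ℝ) : Measurable fun V : ℕ → ℝ => sold (N : ℕ∞) pr V := by
  apply measurable_to_countable'
  intro n
  rcases lt_trichotomy n N with hn | hn | hn
  · have he : (fun V : ℕ → ℝ => sold (N : ℕ∞) pr V) ⁻¹' {n}
        = {V : ℕ → ℝ | (n : ℕ∞) ≤ dem V pr} ∩ {V : ℕ → ℝ | ((n + 1 : ℕ) : ℕ∞) ≤ dem V pr}ᶜ := by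
      ext V
      simp only [Set.mem_preimage, Set.mem_singleton_iff, Set.mem_inter_iff, Set.mem_setOf_eq,
        Set.mem_compl_iff]
      constructor
      · intro h
        have hlt : dem V pr < (N : ℕ∞) := by
          by_contra hc
          rw [sold_eq_of_ge (le_of_not_gt hc)] at h
          omega
        have := sold_eq_of_lt (V := V) hlt
        rw [this] at h
        have hde : dem V pr = (n : ℕ∞) := by
          rw [← ENat.coe_toNat (ne_top_of_lt hlt), h]
        rw [hde]
        constructor
        · exact le_rfl
        · rw [Nat.cast_le]; omega
      · rintro ⟨h1, h2⟩
        have hde : dem V pr = (n : ℕ∞) := enat_eq_of h1 (lt_of_not_ge h2)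
        have : sold (N : ℕ∞) pr V = (dem V pr).toNat :=
          sold_eq_of_lt (by rw [hde]; exact_mod_cast hn)
        rw [this, hde]
        simp
    rw [he]
    exact (meas_dem_ge n pr).inter (meas_dem_ge (n + 1) pr).compl
  · subst hn
    have he : (fun V : ℕ → ℝ => sold (n : ℕ∞) pr V) ⁻¹' {n}
        = {V : ℕ → ℝ | (n : ℕ∞) ≤ dem V pr} := by
      ext V
      simp only [Set.mem_preimage, Set.mem_singleton_iff, Set.mem_setOf_eq]
      constructor
      · intro h
        by_contra hc
        have hlt := lt_of_not_ge hc
        rw [sold_eq_of_lt hlt] at h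
        have hde : dem V pr = (n : ℕ∞) := by
          rw [← ENat.coe_toNat (ne_top_of_lt hlt), h]
        rw [hde] at hlt
        exact lt_irrefl _ hlt
      · exact sold_eq_of_ge
    rw [he]
    exact meas_dem_ge n pr
  · have he : (fun V : ℕ → ℝ => sold (N : ℕ∞) pr V) ⁻¹' {n} = ∅ := by
      ext V
      simp only [Set.mem_preimage, Set.mem_singleton_iff, Set.mem_empty_iff_false, iff_false]
      intro h
      have := sold_le (V := V) (N := N) pr
      omega
    rw [he]
    exact MeasurableSet.empty

lemma meas_min_dem_ge (k : ℕ) (p s : ℝ) :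
    MeasurableSet {V : ℕ → ℝ | (k : ℕ∞) ≤ min (dem V p) (dem V s)} := by
  have he : {V : ℕ → ℝ | (k : ℕ∞) ≤ min (dem V p) (dem V s)}
      = {V : ℕ → ℝ | (k : ℕ∞) ≤ dem V p} ∩ {V : ℕ → ℝ | (k : ℕ∞) ≤ dem V s} := by
    ext V; simp [le_min_iff]
  rw [he]
  exact (meas_dem_ge k p).inter (meas_dem_ge k s)

lemma meas_thetaN (Q : ℕ → ℝ) (C : ℕ) (p : ℝ) : Measurable fun V : ℕ → ℝ => thetaN Q C p V := by
  apply measurable_to_countable'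
  intro t
  set s := safeP Q C
  rcases Nat.eq_zero_or_pos t with ht | ht
  · subst ht
    have he : (fun V : ℕ → ℝ => thetaN Q C p V) ⁻¹' {0}
        = {V : ℕ → ℝ | ((1 : ℕ) : ℕ∞) ≤ min (dem V p) (dem V s)}ᶜ
          ∪ ⋂ j : ℕ, {V : ℕ → ℝ | (j : ℕ∞) ≤ min (dem V p) (dem V s)} := by
      ext V
      simp only [Set.mem_preimage, Set.mem_singleton_iff, Set.mem_union, Set.mem_compl_iff,
        Set.mem_setOf_eq, Set.mem_iInter]
      rw [thetaN, ENat.toNat_eq_zero]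
      constructor
      · rintro (h | h)
        · left
          rw [h]
          intro hc
          exact (by simp : ¬ ((1:ℕ∞) ≤ 0)) (by exact_mod_cast hc)
        · right
          intro j
          rw [h]
          exact le_top
      · rintro (h | h)
        · left
          have : min (dem V p) (dem V s) < ((1:ℕ):ℕ∞) := lt_of_not_ge h
          exact ENat.lt_one_iff_eq_zero.mp (by exact_mod_cast this)
        · right
          exact (enat_top_iff _).mpr h
    rw [he]
    exact ((meas_min_dem_ge 1 p s).compl).union (MeasurableSet.iInter fun j => meas_min_dem_ge j p s)
  · have he : (fun V : ℕ → ℝ => thetaN Q C p V) ⁻¹' {t}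
        = {V : ℕ → ℝ | (t : ℕ∞) ≤ min (dem V p) (dem V s)}
          ∩ {V : ℕ → ℝ | ((t + 1 : ℕ) : ℕ∞) ≤ min (dem V p) (dem V s)}ᶜ := by
      ext V
      simp only [Set.mem_preimage, Set.mem_singleton_iff, Set.mem_inter_iff, Set.mem_setOf_eq,
        Set.mem_compl_iff]
      rw [thetaN]
      constructor
      · intro h
        have hne : min (dem V p) (dem V s) ≠ ⊤ := by
          intro hc
          rw [hc] at h
          simp at h
          omega
        have hmin : min (dem V p) (dem V s) = (t : ℕ∞) := by
          rw [← ENat.coe_toNat hne, h]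
        rw [hmin]
        constructor
        · exact le_rfl
        · rw [Nat.cast_le]; omega
      · rintro ⟨h1, h2⟩
        have hmin : min (dem V p) (dem V s) = (t : ℕ∞) := enat_eq_of h1 (lt_of_not_ge h2)
        rw [hmin]
        simp
    rw [he]
    exact (meas_min_dem_ge t p s).inter (meas_min_dem_ge (t + 1) p s).compl

lemma meas_binop {α : Type*} [MeasurableSpace α] {f g : α → ℕ} (hf : Measurable f)
    (hg : Measurable g) (op : ℕ → ℕ → ℕ) : Measurable fun a => op (f a) (g a) := by
  apply measurable_to_countable'
  intro n
  have he : (fun a => op (f a) (g a)) ⁻¹' {n}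
      = ⋃ i : ℕ, ⋃ j : ℕ, ({a | f a = i} ∩ {a | g a = j} ∩ {_a : α | op i j = n}) := by
    ext a
    simp only [Set.mem_preimage, Set.mem_singleton_iff, Set.mem_iUnion, Set.mem_inter_iff,
      Set.mem_setOf_eq]
    constructor
    · intro h; exact ⟨f a, g a, ⟨rfl, rfl⟩, h⟩
    · rintro ⟨i, j, ⟨hi, hj⟩, hop⟩
      rw [hi, hj]
      exact hop
  rw [he]
  apply MeasurableSet.iUnion
  intro i
  apply MeasurableSet.iUnion
  intro j
  exact ((hf (measurableSet_singleton i)).inter (hg (measurableSet_singleton j))).inter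
    (MeasurableSet.const _)

lemma meas_eval {g : (ℕ → ℝ) → ℕ} (hg : Measurable g) (B : ℕ) (hB : ∀ V, g V ≤ B) :
    Measurable fun V : ℕ → ℝ => V (g V) := by
  have he : (fun V : ℕ → ℝ => V (g V))
      = fun V => ∑ k ∈ Finset.range (B + 1), if g V = k then V k else 0 := by
    funext V
    rw [Finset.sum_ite_eq]
    simp [Nat.lt_succ_of_le (hB V)]
  rw [he]
  apply Finset.measurable_sum
  intro k _
  exact Measurable.ite (hg (measurableSet_singleton k)) (measurable_pi_apply k) measurable_const

lemma meas_Q_comp {g : (ℕ → ℝ) → ℕ} (hg : Measurable g) (Q : ℕ → ℝ) :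
    Measurable fun V : ℕ → ℝ => Q (g V) :=
  Measurable.of_discrete.comp hg

lemma meas_wfl_integrand (Q : ℕ → ℝ) (N : ℕ) (pr : ℝ) :
    Measurable fun V : ℕ → ℝ => V (sold (N : ℕ∞) pr V) - Q (sold (N : ℕ∞) pr V) :=
  (meas_eval (meas_sold N pr) N fun _ => sold_le _).sub (meas_Q_comp (meas_sold N pr) Q)

end Meas
section Integr

lemma w_nonneg {V Q : ℕ → ℝ} (hQ : IsCost Q) (hV : IsValuation V) {K : ℕ} (hK : 1 ≤ K) :
    0 ≤ V (sold (K : ℕ∞) (safeP Q K) V) - Q (sold (K : ℕ∞) (safeP Q K) V) := by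
  have h0 := lemW hQ hV hK (Nat.zero_le K)
  rw [hV.1] at h0
  simpa using h0

lemma meas_isval : MeasurableSet {V : ℕ → ℝ | IsValuation V} := by
  have he : {V : ℕ → ℝ | IsValuation V} =
      ({V : ℕ → ℝ | V 0 = 0} ∩ (⋂ n : ℕ, {V : ℕ → ℝ | V n ≤ V (n + 1)}) ∩
        (⋂ j : ℕ, {V : ℕ → ℝ | 1 ≤ j → marg V (j + 1) ≤ marg V j}) ∩
        (⋃ N : ℕ, ⋂ j : ℕ, {V : ℕ → ℝ | N ≤ j → marg V j = 0})) := by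
    ext V
    simp only [Set.mem_setOf_eq, Set.mem_inter_iff, Set.mem_iInter, Set.mem_iUnion, IsValuation]
    constructor
    · rintro ⟨h0, hmono, hconc, N, hN⟩
      exact ⟨⟨⟨h0, fun n => hmono (Nat.le_succ n)⟩, fun j hj => hconc j hj⟩,
        N, fun j hj => hN j hj⟩
    · rintro ⟨⟨⟨h0, hmono⟩, hconc⟩, N, hN⟩
      exact ⟨h0, monotone_nat_of_le_succ hmono, fun j hj => hconc j hj, N, fun j hj => hN j hj⟩
  rw [he]
  refine MeasurableSet.inter (MeasurableSet.inter (MeasurableSet.inter ?_ ?_) ?_) ?_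
  · exact measurable_pi_apply 0 (measurableSet_singleton 0)
  · exact MeasurableSet.iInter fun n =>
      measurableSet_le (measurable_pi_apply n) (measurable_pi_apply (n + 1))
  · refine MeasurableSet.iInter fun j => ?_
    by_cases hj : 1 ≤ j
    · have : {V : ℕ → ℝ | 1 ≤ j → marg V (j + 1) ≤ marg V j}
          = {V : ℕ → ℝ | marg V (j + 1) ≤ marg V j} := by ext V; simp [hj]
      rw [this]
      exact measurableSet_le (meas_marg (j + 1)) (meas_marg j)
    · have : {V : ℕ → ℝ | 1 ≤ j → marg V (j + 1) ≤ marg V j} = Set.univ := by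
        ext V; simp [hj]
      rw [this]; exact MeasurableSet.univ
  · refine MeasurableSet.iUnion fun N => MeasurableSet.iInter fun j => ?_
    by_cases hj : N ≤ j
    · have : {V : ℕ → ℝ | N ≤ j → marg V j = 0} = {V : ℕ → ℝ | marg V j = 0} := by
        ext V; simp [hj]
      rw [this]
      exact meas_marg j (measurableSet_singleton 0)
    · have : {V : ℕ → ℝ | N ≤ j → marg V j = 0} = Set.univ := by ext V; simp [hj]
      rw [this]; exact MeasurableSet.univ

variable {F : Measure (ℕ → ℝ)} [IsProbabilityMeasure F]

lemma integrable_eval_comp (hint : ∀ x : ℕ, Integrable (fun V : ℕ → ℝ => V x) F)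
    {g : (ℕ → ℝ) → ℕ} (hg : Measurable g) (B : ℕ) (hB : ∀ V, g V ≤ B) :
    Integrable (fun V : ℕ → ℝ => V (g V)) F := by
  refine Integrable.mono' (g := fun V => ∑ k ∈ Finset.range (B + 1), |V k|) ?_
    (meas_eval hg B hB).aestronglyMeasurable ?_
  · exact integrable_finset_sum _ fun k _ => (hint k).abs
  · apply Filter.Eventually.of_forall
    intro V
    rw [Real.norm_eq_abs]
    exact Finset.single_le_sum (f := fun k => |V k|) (fun k _ => abs_nonneg _)
      (Finset.mem_range.mpr (Nat.lt_succ_of_le (hB V)))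

lemma integrable_Q_comp (Q : ℕ → ℝ) {g : (ℕ → ℝ) → ℕ} (hg : Measurable g) (B : ℕ)
    (hB : ∀ V, g V ≤ B) : Integrable (fun V : ℕ → ℝ => Q (g V)) F := by
  refine Integrable.mono' (g := fun _ => ∑ k ∈ Finset.range (B + 1), |Q k|)
    (integrable_const _) (meas_Q_comp hg Q).aestronglyMeasurable ?_
  apply Filter.Eventually.of_forall
  intro V
  rw [Real.norm_eq_abs]
  exact Finset.single_le_sum (f := fun k => |Q k|) (fun k _ => abs_nonneg _)
    (Finset.mem_range.mpr (Nat.lt_succ_of_le (hB V)))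

lemma integrable_wfl (hint : ∀ x : ℕ, Integrable (fun V : ℕ → ℝ => V x) F) (Q : ℕ → ℝ)
    (N : ℕ) (pr : ℝ) :
    Integrable (fun V : ℕ → ℝ => V (sold (N : ℕ∞) pr V) - Q (sold (N : ℕ∞) pr V)) F :=
  (integrable_eval_comp hint (meas_sold N pr) N fun _ => sold_le _).sub
    (integrable_Q_comp Q (meas_sold N pr) N fun _ => sold_le _)

end Integr

/-- if `(C,p)` is welfare-optimal and `C` is even, then
`W(M(C/2)) ≥ (q/2)·(1C)` where `q = Pr[d_V(p) ≥ C]`. -/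
theorem stmt11 (F : Measure (ℕ → ℝ)) (hprob : IsProbabilityMeasure F)
    (hval : F {V | IsValuation V} = 1)
    (hint : ∀ x : ℕ, Integrable (fun V : ℕ → ℝ => V x) F)
    (Q : ℕ → ℝ) (hQ : IsCost Q)
    (C : ℕ) (p : ℝ) (hC : 1 ≤ C) (hp : 0 ≤ p)
    (hopt : ∀ (C' : ℕ) (p' : ℝ), 1 ≤ C' → 0 ≤ p' →
      Wfl F Q (C' : ℕ∞) p' ≤ Wfl F Q (C : ℕ∞) p)
    (heven : 2 ∣ C) :
    ((F {V | (C : ℕ∞) ≤ dem V p}).toReal / 2) *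
        (∫ V, (if dem V p < (C : ℕ∞) then
            V ((dem V p).toNat) - V (thetaN Q C p V) - Q ((dem V p).toNat - thetaN Q C p V)
          else 0) ∂F)
      ≤ Wfl F Q ((C / 2 : ℕ) : ℕ∞) (safeP Q (C / 2)) := by
  haveI := hprob
  obtain ⟨K, hCK⟩ := heven
  have hK : 1 ≤ K := by omega
  have hhalf : C / 2 = K := by omega
  rw [hhalf]
  have hval_ae : ∀ᵐ V ∂F, IsValuation V := by
    refine ae_iff.mpr ?_
    have hc : F {V : ℕ → ℝ | IsValuation V}ᶜ = 0 := by
      rw [prob_compl_eq_zero_iff meas_isval]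
      exact hval
    exact hc
  have hHi : MeasurableSet {V : ℕ → ℝ | (C : ℕ∞) ≤ dem V p} := meas_dem_ge C p
  have hG0 : 0 ≤ Q C - 2 * Q K := by have := QC_ge hQ hK hCK; linarith
  -- Integrability of the (1C) integrand
  have hθ'meas : Measurable fun V : ℕ → ℝ => min (thetaN Q C p V) C :=
    (Measurable.of_discrete (f := fun t : ℕ => min t C)).comp (meas_thetaN Q C p)
  have hd'meas : Measurable fun V : ℕ → ℝ => sold (C : ℕ∞) p V := meas_sold C p
  have hn'meas : Measurable fun V : ℕ → ℝ => sold (C : ℕ∞) p V - min (thetaN Q C p V) C :=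
    meas_binop hd'meas hθ'meas (· - ·)
  have hinner : Integrable (fun V : ℕ → ℝ =>
      V (sold (C : ℕ∞) p V) - V (min (thetaN Q C p V) C)
        - Q (sold (C : ℕ∞) p V - min (thetaN Q C p V) C)) F :=
    ((integrable_eval_comp hint hd'meas C fun _ => sold_le _).sub
      (integrable_eval_comp hint hθ'meas C fun _ => min_le_right _ _)).sub
      (integrable_Q_comp Q hn'meas C fun V => le_trans (Nat.sub_le _ _) (sold_le _))
  have hS : MeasurableSet {V : ℕ → ℝ | dem V p < (C : ℕ∞)} := by
    have he : {V : ℕ → ℝ | dem V p < (C : ℕ∞)} = {V : ℕ → ℝ | (C : ℕ∞) ≤ dem V p}ᶜ := by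
      ext V; simp [not_le]
    rw [he]; exact hHi.compl
  have hAeq : (fun V : ℕ → ℝ => if dem V p < (C : ℕ∞) then
        V ((dem V p).toNat) - V (thetaN Q C p V) - Q ((dem V p).toNat - thetaN Q C p V)
      else 0)
      = Set.indicator {V : ℕ → ℝ | dem V p < (C : ℕ∞)} (fun V =>
        V (sold (C : ℕ∞) p V) - V (min (thetaN Q C p V) C)
          - Q (sold (C : ℕ∞) p V - min (thetaN Q C p V) C)) := by
    funext V
    rw [Set.indicator_apply]
    by_cases h : dem V p < (C : ℕ∞)
    · rw [if_pos h, if_pos (by exact h : V ∈ {V : ℕ → ℝ | dem V p < (C : ℕ∞)})]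
      have hsold : sold (C : ℕ∞) p V = (dem V p).toNat := sold_eq_of_lt h
      have hθle : thetaN Q C p V ≤ C := by
        have h1 : thetaN Q C p V ≤ (dem V p).toNat :=
          ENat.toNat_le_toNat (min_le_left _ _) (ne_top_of_lt h)
        have h2 : (dem V p).toNat ≤ C := by
          have h3 := ENat.toNat_le_toNat h.le (WithTop.coe_ne_top (a := C))
          simpa using h3
        omega
      rw [hsold, min_eq_left hθle]
    · rw [if_neg h, if_neg (by exact h)]
  have hIA : Integrable (fun V : ℕ → ℝ => if dem V p < (C : ℕ∞) then
      V ((dem V p).toNat) - V (thetaN Q C p V) - Q ((dem V p).toNat - thetaN Q C p V)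
    else 0) F := by
    rw [hAeq]; exact hinner.indicator hS
  have h1C : (∫ V, (if dem V p < (C : ℕ∞) then
      V ((dem V p).toNat) - V (thetaN Q C p V) - Q ((dem V p).toNat - thetaN Q C p V)
    else 0) ∂F) ≤ Q C - 2 * Q K := by
    have hle : ∀ᵐ V ∂F, (if dem V p < (C : ℕ∞) then
        V ((dem V p).toNat) - V (thetaN Q C p V) - Q ((dem V p).toNat - thetaN Q C p V)
      else 0) ≤ Q C - 2 * Q K := hval_ae.mono fun V hv => P1 hQ hv hK hCK p
    calc (∫ V, (if dem V p < (C : ℕ∞) then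
          V ((dem V p).toNat) - V (thetaN Q C p V) - Q ((dem V p).toNat - thetaN Q C p V)
        else 0) ∂F) ≤ ∫ _V, (Q C - 2 * Q K) ∂F :=
          integral_mono_ae hIA (integrable_const _) hle
    _ = Q C - 2 * Q K := by simp
  -- main comparison
  have hIfC := integrable_wfl hint Q C p
  have hIfK := integrable_wfl hint Q K p
  have hIfS := integrable_wfl hint Q K (safeP Q K)
  have hInd : Integrable ({V : ℕ → ℝ | (C : ℕ∞) ≤ dem V p}.indicator
      fun _ => Q C - 2 * Q K) F := (integrable_const _).indicator hHi
  have hptws : ∀ᵐ V ∂F, (V (sold (C : ℕ∞) p V) - Q (sold (C : ℕ∞) p V))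
      - (V (sold (K : ℕ∞) p V) - Q (sold (K : ℕ∞) p V))
      + ({V : ℕ → ℝ | (C : ℕ∞) ≤ dem V p}.indicator fun _ => Q C - 2 * Q K) V
      ≤ V (sold (K : ℕ∞) (safeP Q K) V) - Q (sold (K : ℕ∞) (safeP Q K) V) := by
    refine hval_ae.mono fun V hv => ?_
    have h2 := P2 hQ hv hK hCK p
    rw [Set.indicator_apply]
    simp only [Set.mem_setOf_eq]
    exact h2
  have hmono := integral_mono_ae ((hIfC.sub hIfK).add hInd) hIfS hptws
  rw [integral_add' (hIfC.sub hIfK) hInd, integral_sub' hIfC hIfK,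
    integral_indicator_const _ hHi] at hmono
  have hopt' := hopt K p hK hp
  unfold Wfl at hopt'
  have hqG : (F {V : ℕ → ℝ | (C : ℕ∞) ≤ dem V p}).toReal * (Q C - 2 * Q K)
      ≤ ∫ V, (V (sold (K : ℕ∞) (safeP Q K) V) - Q (sold (K : ℕ∞) (safeP Q K) V)) ∂F := by
    rw [smul_eq_mul] at hmono
    rw [measureReal_def] at hmono
    linarith
  have hW0 : 0 ≤ ∫ V, (V (sold (K : ℕ∞) (safeP Q K) V) - Q (sold (K : ℕ∞) (safeP Q K) V)) ∂F :=
    integral_nonneg_of_ae (hval_ae.mono fun V hv => w_nonneg hQ hv hK)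
  have hq0 : 0 ≤ (F {V : ℕ → ℝ | (C : ℕ∞) ≤ dem V p}).toReal := ENNReal.toReal_nonneg
  unfold Wfl
  have hmul := mul_le_mul_of_nonneg_left h1C
    (by linarith : (0 : ℝ) ≤ (F {V : ℕ → ℝ | (C : ℕ∞) ≤ dem V p}).toReal / 2)
  nlinarith [hmul, hqG, hW0, hq0, hG0]

end
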